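/- arXiv:1507.07142 — 4 statements merged into one kernel-verified Lean document; each statement's English description precedes it below -/
import Mathlib

section
/- Let à = [ã_ij] be an m×m real matrix with ã_ij ≥ 0 for all i ≠ j and with all row sums negative, i.e., Σ_{j=1}^m ã_ij < 0 for every i. Let v : [0,∞) → ℝ^m be differentiable with v_i(t) ≥ 0 for all i and all t ≥ 0, satisfying v'(t) ≤ à v(t) componentwise for all t ≥ 0. Define V_i(t) := v_i(t)² and the matrix A = [a_ij] by a_ii := ã_ii + Σ_{j=1}^m ã_ij and a_ij := ã_ij for j ≠ i. Then: (1) V'(t) ≤ A V(t) componentwise for all t ≥ 0; (2) a_ij ≥ 0 for all i ≠ j; and (3) Σ_{j=1}^m a_ij = 2 Σ_{j=1}^m ã_ij < Σ_{j=1}^m ã_ij < 0 for every i. -/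
/-- **Lemma 2 of the paper.** If nonnegative functions `v i` satisfy the linear
comparison inequality `v' ≤ Ã v` with a Metzler matrix `Ã` having negative row
sums, then the squares `V i = (v i)²` satisfy the comparison inequality
`V' ≤ A V` with the matrix `A` given by `a_ii = ã_ii + ∑_j ã_ij`,
`a_ij = ã_ij (j ≠ i)`, which is again Metzler and has row sums
`∑_j a_ij = 2 ∑_j ã_ij < ∑_j ã_ij < 0`. -/
theorem squared_comparison {m : ℕ} (Atil : Matrix (Fin m) (Fin m) ℝ)
    (hAtil : ∀ i j, i ≠ j → 0 ≤ Atil i j)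
    (hrow : ∀ i, ∑ j, Atil i j < 0)
    (v v' : ℝ → Fin m → ℝ)
    (hv : ∀ t ≥ (0 : ℝ), HasDerivAt v (v' t) t)
    (hpos : ∀ t ≥ (0 : ℝ), ∀ i, 0 ≤ v t i)
    (hcomp : ∀ t ≥ (0 : ℝ), ∀ i, v' t i ≤ Atil.mulVec (v t) i)
    (A : Matrix (Fin m) (Fin m) ℝ)
    (hAdef : ∀ i j, A i j = if j = i then Atil i i + ∑ k, Atil i k else Atil i j) :
    (∀ t ≥ (0 : ℝ), ∀ i,
        deriv (fun s => (v s i) ^ 2) t ≤ A.mulVec (fun j => (v t j) ^ 2) i) ∧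
    (∀ i j, i ≠ j → 0 ≤ A i j) ∧
    (∀ i, ∑ j, A i j = 2 * ∑ j, Atil i j ∧
        2 * ∑ j, Atil i j < ∑ j, Atil i j ∧ ∑ j, Atil i j < 0) := by

  have hAsplit : ∀ i j, A i j = Atil i j + (if j = i then ∑ k, Atil i k else 0) := by
    intro i j
    rw [hAdef]
    by_cases h : j = i
    · subst h; simp
    · simp [h]
  refine ⟨?_, ?_, ?_⟩
  · intro t ht i
    have hdv : HasDerivAt (fun s => v s i) (v' t i) t :=
      (ContinuousLinearMap.proj (R := ℝ) (φ := fun _ : Fin m => ℝ)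
        i).hasFDerivAt.comp_hasDerivAt t (hv t ht)
    have hsq : HasDerivAt (fun s => (v s i) ^ 2) (2 * v t i * v' t i) t := by
      simpa using hdv.fun_pow 2
    rw [hsq.deriv]
    have h1 : 2 * v t i * v' t i ≤ 2 * v t i * Atil.mulVec (v t) i :=
      mul_le_mul_of_nonneg_left (hcomp t ht i)
        (by have := hpos t ht i; linarith)
    refine h1.trans ?_
    have hL : 2 * v t i * Atil.mulVec (v t) i
        = ∑ j, Atil i j * (2 * v t i * v t j) := by
      simp only [Matrix.mulVec, dotProduct, Finset.mul_sum]
      exact Finset.sum_congr rfl (fun j _ => by ring)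
    have hR : A.mulVec (fun j => (v t j) ^ 2) i
        = ∑ j, Atil i j * ((v t j) ^ 2 + (v t i) ^ 2) := by
      simp only [Matrix.mulVec, dotProduct]
      have : ∀ j ∈ Finset.univ, A i j * (v t j) ^ 2
          = Atil i j * (v t j) ^ 2
            + (if j = i then (∑ k, Atil i k) * (v t i) ^ 2 else 0) := by
        intro j _
        rw [hAsplit]
        by_cases h : j = i
        · subst h; simp; ring
        · simp [h]
      rw [Finset.sum_congr rfl this, Finset.sum_add_distrib,
        Finset.sum_ite_eq' Finset.univ i]
      simp only [Finset.mem_univ, if_true, Finset.sum_mul, ← Finset.sum_add_distrib]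
      exact Finset.sum_congr rfl (fun j _ => by ring)
    rw [hL, hR]
    refine Finset.sum_le_sum (fun j _ => ?_)
    by_cases h : j = i
    · subst h; exact le_of_eq (by ring)
    · refine mul_le_mul_of_nonneg_left ?_ (hAtil i j (fun he => h he.symm))
      have := two_mul_le_add_sq (v t i) (v t j)
      linarith
  · intro i j hij
    rw [hAdef]
    rw [if_neg (fun h : j = i => hij h.symm)]
    exact hAtil i j hij
  · intro i
    have hs : ∑ j, A i j = 2 * ∑ j, Atil i j := by
      simp only [hAsplit, Finset.sum_add_distrib,
        Finset.sum_ite_eq' Finset.univ i, Finset.mem_univ, if_true]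
      ring
    exact ⟨hs, by linarith [hrow i], hrow i⟩
end

section
/- Let A = [a_ij] be an m×m real matrix with nonnegative off-diagonal entries and such that every eigenvalue of A (as a complex matrix) has strictly negative real part. Let v : [0,∞) → ℝ^m be differentiable with v_i(t) ≥ 0 for all i and t ≥ 0, and v'(t) ≤ A v(t) componentwise for all t ≥ 0. Then there exist constants b > 0 and c > 0 such that ‖v(t)‖₂ ≤ c e^{−bt} ‖v(0)‖₂ for all t ≥ 0. -/
set_option maxHeartbeats 1000000

open Matrix Filter Topology
open scoped NNReal ENNReal Pointwise

attribute [local instance] Matrix.linftyOpNormedAddCommGroup Matrix.linftyOpNormedRing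
  Matrix.linftyOpNormedAlgebra Matrix.linftyOpNormedSpace

noncomputable section Aux

variable {n : Type*} [Fintype n] [DecidableEq n]

instance matComplete : CompleteSpace (Matrix n n ℂ) :=
  (inferInstance : CompleteSpace (n → n → ℂ))

/-- row sums are bounded by the linfty operator norm -/
lemma row_sum_le_norm (M : Matrix n n ℝ) (i : n) : ∑ j, |M i j| ≤ ‖M‖ := by
  rw [Matrix.linfty_opNorm_def]
  have : (∑ j, ‖M i j‖₊ : ℝ≥0) ≤ (Finset.univ.sup fun i => ∑ j, ‖M i j‖₊) :=
    Finset.le_sup (f := fun i => ∑ j, ‖M i j‖₊) (Finset.mem_univ i)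
  calc ∑ j, |M i j| = ((∑ j, ‖M i j‖₊ : ℝ≥0) : ℝ) := by
        push_cast; exact Finset.sum_congr rfl fun j _ => (Real.norm_eq_abs _).symm
    _ ≤ _ := by exact_mod_cast this

lemma norm_map_ofReal (M : Matrix n n ℝ) : ‖M.map (Complex.ofReal ·)‖ = ‖M‖ := by
  rw [Matrix.linfty_opNorm_def, Matrix.linfty_opNorm_def]
  congr 1
  apply Finset.sup_congr rfl
  intro i _
  apply Finset.sum_congr rfl
  intro j _
  simp [Matrix.map_apply]

lemma map_ofReal_pow (M : Matrix n n ℝ) (k : ℕ) :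
    (M ^ k).map (Complex.ofReal ·) = (M.map (Complex.ofReal ·)) ^ k := by
  have : ∀ P : Matrix n n ℝ, P.map (Complex.ofReal ·) = Complex.ofRealHom.mapMatrix P :=
    fun P => rfl
  rw [this, this, map_pow]

lemma spectrum_transpose (M : Matrix n n ℂ) : spectrum ℂ Mᵀ = spectrum ℂ M := by
  ext μ
  simp only [spectrum.mem_iff, Matrix.isUnit_iff_isUnit_det]
  have : algebraMap ℂ (Matrix n n ℂ) μ - Mᵀ = (algebraMap ℂ (Matrix n n ℂ) μ - M)ᵀ := by
    rw [Matrix.transpose_sub]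
    congr 1
    rw [Matrix.algebraMap_eq_diagonal, Matrix.diagonal_transpose]
  rw [this, Matrix.det_transpose]

/-- summability of the norm series from the spectral radius bound (Gelfand). -/
lemma summable_norm_pow_div [Nonempty n] (Nc : Matrix n n ℂ) {s : ℝ} (hs : 0 < s)
    (h : ∀ μ ∈ spectrum ℂ Nc, ‖μ‖₊ < s.toNNReal) :
    Summable (fun k : ℕ => ‖Nc ^ k‖ / s ^ k) := by
  have hρ : spectralRadius ℂ Nc < (s.toNNReal : ℝ≥0∞) :=
    spectrum.spectralRadius_lt_of_forall_lt Nc h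
  obtain ⟨r, hr1, hr2⟩ := ENNReal.lt_iff_exists_nnreal_btwn.mp hρ
  have hrs : (r : ℝ) < s := by
    have := ENNReal.coe_lt_coe.mp hr2
    calc (r : ℝ) < (s.toNNReal : ℝ) := by exact_mod_cast this
      _ = s := Real.coe_toNNReal s hs.le
  have hgel := spectrum.pow_nnnorm_pow_one_div_tendsto_nhds_spectralRadius Nc
  have hev : ∀ᶠ k : ℕ in atTop, (‖Nc ^ k‖₊ : ℝ≥0∞) ^ (1 / (k : ℝ)) < (r : ℝ≥0∞) :=
    hgel.eventually_lt_const hr1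
  obtain ⟨K, hK⟩ := (hev.and (eventually_ge_atTop 1)).exists_forall_of_atTop
  -- bound for k ≥ K
  have hbound : ∀ k ≥ K, ‖Nc ^ k‖ ≤ (r : ℝ) ^ k := by
    intro k hk
    obtain ⟨h1, h2⟩ := hK k hk
    have hk0 : (k : ℝ) ≠ 0 := Nat.cast_ne_zero.mpr (by omega)
    have : ((‖Nc ^ k‖₊ : ℝ≥0∞)) ≤ ((r : ℝ≥0∞)) ^ (k : ℝ) := by
      calc (‖Nc ^ k‖₊ : ℝ≥0∞) = ((‖Nc ^ k‖₊ : ℝ≥0∞) ^ (1 / (k:ℝ))) ^ (k:ℝ) := by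
            rw [← ENNReal.rpow_mul, one_div, inv_mul_cancel₀ hk0, ENNReal.rpow_one]
        _ ≤ _ := ENNReal.rpow_le_rpow h1.le (Nat.cast_nonneg k)
    rw [ENNReal.rpow_natCast, ← ENNReal.coe_pow, ENNReal.coe_le_coe] at this
    calc ‖Nc ^ k‖ = ((‖Nc ^ k‖₊ : ℝ≥0) : ℝ) := rfl
      _ ≤ ((r ^ k : ℝ≥0) : ℝ) := by exact_mod_cast this
      _ = (r : ℝ) ^ k := by push_cast; ring
  have hq : (r : ℝ) / s < 1 := (div_lt_one hs).mpr hrs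
  have hq0 : 0 ≤ (r : ℝ) / s := div_nonneg r.coe_nonneg hs.le
  rw [← summable_nat_add_iff K]
  have hgeo : Summable (fun k : ℕ => ((r : ℝ)/s) ^ K * ((r : ℝ)/s) ^ k) :=
    (summable_geometric_of_lt_one hq0 hq).mul_left _
  refine Summable.of_nonneg_of_le
    (fun k => div_nonneg (norm_nonneg _) (pow_nonneg hs.le _)) (fun k => ?_) hgeo
  calc ‖Nc ^ (k + K)‖ / s ^ (k + K) ≤ (r : ℝ) ^ (k + K) / s ^ (k + K) := by
        gcongr
        exact hbound (k + K) (Nat.le_add_left K k)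
    _ = ((r : ℝ)/s) ^ (k + K) := (div_pow _ _ _).symm
    _ = ((r : ℝ)/s) ^ K * ((r : ℝ)/s) ^ k := by rw [pow_add, mul_comm]


/-- Key construction: for a Metzler Hurwitz matrix there is `s > 0` and a vector `w`
with `w i ≥ 1/s` and `Aᵀ w = -1`. -/
lemma exists_pos_left_vector {m : ℕ} (hm : 0 < m) (A : Matrix (Fin m) (Fin m) ℝ)
    (hMetzler : ∀ i j, i ≠ j → 0 ≤ A i j)
    (hHurwitz : ∀ μ ∈ spectrum ℂ (A.map (Complex.ofReal ·)), μ.re < 0) :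
    ∃ s : ℝ, 0 < s ∧ ∃ w : Fin m → ℝ,
      (∀ i, 1/s ≤ w i) ∧ (∀ i, Aᵀ.mulVec w i = -1) := by
  haveI : Nonempty (Fin m) := ⟨⟨0, hm⟩⟩
  set Ac := A.map (Complex.ofReal ·) with hAc
  have hne : (spectrum ℂ Ac).Nonempty := spectrum.nonempty Ac
  have hcpt : IsCompact (spectrum ℂ Ac) := spectrum.isCompact Ac
  obtain ⟨μ₀, hμ₀, hmax⟩ := hcpt.exists_isMaxOn hne Complex.continuous_re.continuousOn
  obtain ⟨ν₀, hν₀, hnrm⟩ := hcpt.exists_isMaxOn hne continuous_norm.continuousOn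
  set δ : ℝ := -μ₀.re with hδdef
  have hδ : 0 < δ := by simpa [hδdef] using hHurwitz μ₀ hμ₀
  set R : ℝ := ‖ν₀‖ with hRdef
  have hR : 0 ≤ R := norm_nonneg _
  set X : ℝ := R ^ 2 / (2 * δ) with hXdef
  have hX0 : 0 ≤ X := div_nonneg (sq_nonneg _) (by linarith)
  have hXR : R ^ 2 = 2 * δ * X := by rw [hXdef]; field_simp
  set s : ℝ := 1 + (∑ i, |A i i|) + X with hsdef
  have habs : ∀ i, |A i i| ≤ ∑ j, |A j j| := fun i =>
    Finset.single_le_sum (fun j _ => abs_nonneg (A j j)) (Finset.mem_univ i)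
  have hsum0 : 0 ≤ ∑ i, |A i i| := Finset.sum_nonneg fun i _ => abs_nonneg _
  have hs : 0 < s := by rw [hsdef]; linarith
  have hsR : X < s := by rw [hsdef]; linarith
  refine ⟨s, hs, ?_⟩
  -- the nonnegative matrix `N` and its normalization `P`
  set B : Matrix (Fin m) (Fin m) ℝ := Aᵀ with hBdef
  set N : Matrix (Fin m) (Fin m) ℝ := B + s • (1 : Matrix (Fin m) (Fin m) ℝ) with hNdef
  have hNnn : ∀ i j, 0 ≤ N i j := by
    intro i j
    by_cases hij : i = j
    · subst hij
      have : N i i = A i i + s := by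
        simp [hNdef, hBdef, Matrix.add_apply, Matrix.smul_apply, Matrix.one_apply,
          Matrix.transpose_apply]
      rw [this]
      have h1 := habs i
      have h2 := neg_abs_le (A i i)
      rw [hsdef]; linarith
    · have : N i j = A j i := by
        simp [hNdef, hBdef, Matrix.add_apply, Matrix.smul_apply, Matrix.one_apply, hij,
          Matrix.transpose_apply]
      rw [this]
      exact hMetzler j i (fun h => hij h.symm)
  set Nc : Matrix (Fin m) (Fin m) ℂ := N.map (Complex.ofReal ·) with hNcdef
  -- spectrum of `Nc`
  have hspecN : ∀ μ ∈ spectrum ℂ Nc, ‖μ‖₊ < s.toNNReal := by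
    have hNc_eq : Nc = algebraMap ℂ (Matrix (Fin m) (Fin m) ℂ) (s : ℂ) + Acᵀ := by
      ext i j
      by_cases hij : i = j
      · subst hij
        simp only [hNcdef, hNdef, hBdef, hAc, Matrix.map_apply, Matrix.add_apply,
          Matrix.smul_apply, Matrix.one_apply_eq, Algebra.algebraMap_eq_smul_one,
          Matrix.transpose_apply, Complex.ofReal_add, smul_eq_mul, mul_one]
        push_cast
        ring
      · simp only [hNcdef, hNdef, hBdef, hAc, Matrix.map_apply, Matrix.add_apply,
          Matrix.smul_apply, Matrix.one_apply, Algebra.algebraMap_eq_smul_one,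
          Matrix.transpose_apply, if_neg hij, smul_eq_mul, mul_ite, mul_one, mul_zero,
          Complex.ofReal_add]
        push_cast
        simp [if_neg hij]
    have hspec : spectrum ℂ Nc = ({(s : ℂ)} : Set ℂ) + spectrum ℂ Ac := by
      rw [hNc_eq, ← spectrum.singleton_add_eq, spectrum_transpose]
    intro μ hμ
    rw [hspec] at hμ
    obtain ⟨a, ha, b, hb, rfl⟩ := Set.mem_add.mp hμ
    rw [Set.mem_singleton_iff] at ha
    subst ha
    -- ‖s + b‖ < s
    have hbre : b.re ≤ -δ := by
      have := hmax hb; simpa [hδdef] using this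
    have hbn : ‖b‖ ≤ R := hnrm hb
    have key : ‖(s : ℂ) + b‖ < s := by
      have hsq : ‖(s : ℂ) + b‖ ^ 2 < s ^ 2 := by
        have : ‖(s : ℂ) + b‖ ^ 2 = s ^ 2 + 2 * s * b.re + ‖b‖ ^ 2 := by
          rw [Complex.sq_norm, Complex.sq_norm]
          simp only [Complex.normSq_apply, Complex.add_re, Complex.add_im,
            Complex.ofReal_re, Complex.ofReal_im]
          ring
        rw [this]
        have h1 : 2 * s * b.re ≤ 2 * s * (-δ) := by
          apply mul_le_mul_of_nonneg_left hbre; linarith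
        have h2 : ‖b‖ ^ 2 ≤ R ^ 2 := by
          apply sq_le_sq' _ hbn; linarith [norm_nonneg b]
        have h3 : R ^ 2 < 2 * δ * s := by
          rw [hXR]
          have : 0 < 2 * δ := by linarith
          nlinarith
        nlinarith
      exact lt_of_pow_lt_pow_left₀ 2 hs.le hsq
    rw [← NNReal.coe_lt_coe]
    simpa [Real.coe_toNNReal _ hs.le, coe_nnnorm] using key
  -- Neumann-type series construction of `w`
  have hsummN : Summable (fun k : ℕ => ‖Nc ^ k‖ / s ^ k) := summable_norm_pow_div Nc hs hspecN
  set P : Matrix (Fin m) (Fin m) ℝ := s⁻¹ • N with hPdef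
  have hPapp : ∀ i j, P i j = s⁻¹ * N i j := by
    intro i j; rw [hPdef]; simp [Matrix.smul_apply]
  have hPnn : ∀ i j, 0 ≤ P i j := fun i j => by
    rw [hPapp]; exact mul_nonneg (inv_nonneg.mpr hs.le) (hNnn i j)
  have hpow_nn : ∀ k i j, 0 ≤ (P ^ k) i j := by
    intro k
    induction k with
    | zero => intro i j; by_cases hij : i = j <;> simp [Matrix.one_apply, hij]
    | succ k ih =>
      intro i j
      rw [pow_succ, Matrix.mul_apply]
      exact Finset.sum_nonneg fun l _ => mul_nonneg (ih i l) (hPnn l j)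
  set u : ℕ → Fin m → ℝ := fun k => (P ^ k).mulVec (fun _ => 1) with hudef
  have humv : ∀ k i, u k i = ∑ j, (P ^ k) i j := by
    intro k i
    simp [hudef, Matrix.mulVec, dotProduct]
  have hu0 : ∀ i, u 0 i = 1 := by intro i; simp [hudef, Matrix.one_mulVec]
  have husucc : ∀ k, u (k + 1) = P.mulVec (u k) := by
    intro k
    rw [hudef]
    simp only
    rw [Matrix.mulVec_mulVec, ← pow_succ']
  have hu_nonneg : ∀ k i, 0 ≤ u k i := fun k i => by
    rw [humv]; exact Finset.sum_nonneg fun j _ => hpow_nn k i j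
  have hu_le : ∀ k i, u k i ≤ ‖Nc ^ k‖ / s ^ k := by
    intro k i
    have h1 : u k i ≤ ‖P ^ k‖ := by
      rw [humv]
      refine le_trans (Finset.sum_le_sum fun j _ => le_abs_self _) (row_sum_le_norm _ i)
    have h2 : ‖P ^ k‖ = ‖Nc ^ k‖ / s ^ k := by
      rw [hPdef, smul_pow, norm_smul, ← map_ofReal_pow, norm_map_ofReal]
      rw [Real.norm_eq_abs, abs_pow, abs_inv, abs_of_pos hs, inv_pow, div_eq_inv_mul]
    rw [← h2]; exact h1
  have hsumu : ∀ i, Summable fun k => u k i := fun i =>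
    Summable.of_nonneg_of_le (fun k => hu_nonneg k i) (fun k => hu_le k i) hsummN
  set w : Fin m → ℝ := fun i => (∑' k, u k i) / s with hwdef
  have hw1 : ∀ i, 1 / s ≤ w i := by
    intro i
    have h1 : (1 : ℝ) ≤ ∑' k, u k i := by
      have := Summable.le_tsum (hsumu i) 0 (fun j _ => hu_nonneg j i)
      rwa [hu0 i] at this
    rw [hwdef]
    exact (div_le_div_iff_of_pos_right hs).mpr h1
  have hPw : ∀ i, P.mulVec w i = w i - 1 / s := by
    intro i
    have hcalc : P.mulVec w i = ∑ j, P i j * w j := by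
      simp [Matrix.mulVec, dotProduct]
    rw [hcalc]
    have hstep1 : ∀ j, P i j * w j = ∑' k, P i j * (u k j / s) := by
      intro j
      rw [hwdef, tsum_mul_left]
      simp only
      rw [tsum_div_const]
    have hsum2 : ∀ j : Fin m, Summable fun k => P i j * (u k j / s) :=
      fun j => (((hsumu j).div_const s).mul_left _)
    have hswap : ∑ j, ∑' k, P i j * (u k j / s) = ∑' k, ∑ j, P i j * (u k j / s) :=
      (Summable.tsum_finsetSum (fun j _ => hsum2 j)).symm
    have hinner : ∀ k, ∑ j, P i j * (u k j / s) = u (k + 1) i / s := by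
      intro k
      rw [husucc k]
      have : P.mulVec (u k) i = ∑ j, P i j * u k j := by
        simp [Matrix.mulVec, dotProduct]
      rw [this, Finset.sum_div]
      exact Finset.sum_congr rfl fun j _ => by ring
    have hshift : ∑' k, u (k + 1) i = (∑' k, u k i) - 1 := by
      have := Summable.tsum_eq_zero_add (hsumu i)
      rw [hu0 i] at this
      linarith
    calc ∑ j, P i j * w j = ∑' k, ∑ j, P i j * (u k j / s) := by
          rw [← hswap]; exact Finset.sum_congr rfl fun j _ => hstep1 j
      _ = ∑' k, u (k + 1) i / s := by
          exact tsum_congr fun k => hinner k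
      _ = (∑' k, u (k + 1) i) / s := tsum_div_const
      _ = ((∑' k, u k i) - 1) / s := by rw [hshift]
      _ = w i - 1 / s := by rw [hwdef]; ring
  refine ⟨w, hw1, ?_⟩
  intro i
  have hA : ∀ j, Aᵀ i j = s * P i j - (if i = j then s else 0) := by
    intro j
    have hNij : N i j = Aᵀ i j + (if i = j then s else 0) := by
      simp [hNdef, hBdef, Matrix.add_apply, Matrix.smul_apply, Matrix.one_apply,
        mul_ite, mul_one, mul_zero]
    have hPij := hPapp i j
    rw [hNij] at hPij
    have hsP : s * P i j = Aᵀ i j + (if i = j then s else 0) := by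
      rw [hPij, mul_comm s⁻¹, ← mul_assoc]
      field_simp
    linarith [hsP]
  have key : Aᵀ.mulVec w i = s * (P.mulVec w i) - s * w i := by
    calc Aᵀ.mulVec w i = ∑ j, Aᵀ i j * w j := by simp [Matrix.mulVec, dotProduct]
      _ = ∑ j, (s * (P i j * w j) - (if i = j then s else 0) * w j) := by
          refine Finset.sum_congr rfl fun j _ => by rw [hA j]; ring
      _ = s * (∑ j, P i j * w j) - s * w i := by
          rw [Finset.sum_sub_distrib, Finset.mul_sum]
          congr 1
          simp [ite_mul]
      _ = s * (P.mulVec w i) - s * w i := by simp [Matrix.mulVec, dotProduct]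
  rw [key, hPw i]
  have hss : s * (1 / s) = 1 := by field_simp
  nlinarith [hss]

/-- One-sided Grönwall: if `V' ≤ -b V` on `[0,∞)` then `V t ≤ e^{-bt} V 0`. -/
lemma gronwall_decay {V V' : ℝ → ℝ} {b : ℝ} (hb : 0 ≤ b)
    (hV : ∀ t ≥ (0:ℝ), HasDerivAt V (V' t) t)
    (h : ∀ t ≥ (0:ℝ), V' t ≤ -b * V t) :
    ∀ t ≥ (0:ℝ), V t ≤ Real.exp (-b * t) * V 0 := by
  intro t ht
  set g : ℝ → ℝ := fun τ => Real.exp (b * τ) * V τ with hgdef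
  have hg : ∀ τ ≥ (0:ℝ),
      HasDerivAt g (b * Real.exp (b * τ) * V τ + Real.exp (b * τ) * V' τ) τ := by
    intro τ hτ
    have h1 : HasDerivAt (fun σ : ℝ => Real.exp (b * σ)) (b * Real.exp (b * τ)) τ := by
      have := (Real.hasDerivAt_exp (b * τ)).comp τ ((hasDerivAt_id τ).const_mul b)
      simpa [mul_comm, Function.comp_def] using this
    exact h1.mul (hV τ hτ)
  have cont : ContinuousOn g (Set.Ici 0) := fun τ hτ =>
    ((hg τ hτ).continuousAt).continuousWithinAt
  have hanti : AntitoneOn g (Set.Ici 0) := by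
    apply antitoneOn_of_deriv_nonpos (convex_Ici 0) cont
    · intro τ hτ
      rw [interior_Ici] at hτ
      exact ((hg τ (le_of_lt hτ)).differentiableAt).differentiableWithinAt
    · intro τ hτ
      rw [interior_Ici] at hτ
      have hτ' : (0:ℝ) ≤ τ := le_of_lt hτ
      rw [(hg τ hτ').deriv]
      have h1 := h τ hτ'
      have hexp : (0:ℝ) < Real.exp (b * τ) := Real.exp_pos _
      have h2 : Real.exp (b * τ) * V' τ ≤ Real.exp (b * τ) * (-b * V τ) :=
        mul_le_mul_of_nonneg_left h1 hexp.le
      nlinarith [h2]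
  have hgt : Real.exp (b * t) * V t ≤ V 0 := by
    have := hanti Set.self_mem_Ici (Set.mem_Ici.mpr ht) ht
    simpa [hgdef] using this
  have hcomb : Real.exp (-b * t) * Real.exp (b * t) = 1 := by
    rw [← Real.exp_add]; norm_num
  calc V t = (Real.exp (-b * t) * Real.exp (b * t)) * V t := by rw [hcomb, one_mul]
    _ = Real.exp (-b * t) * (Real.exp (b * t) * V t) := by ring
    _ ≤ Real.exp (-b * t) * V 0 := mul_le_mul_of_nonneg_left hgt (Real.exp_pos _).le

/-- The paper's conclusion (20): if the comparison matrix `A` is Metzler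
(nonnegative off-diagonal entries) and Hurwitz (all eigenvalues with strictly
negative real part), then any nonnegative differentiable `v` with
`v' t ≤ A (v t)` componentwise converges exponentially to the origin in the
Euclidean (ℓ²) norm. -/
theorem metzler_hurwitz_exponential_convergence {m : ℕ}
    (A : Matrix (Fin m) (Fin m) ℝ)
    (hMetzler : ∀ i j, i ≠ j → 0 ≤ A i j)
    (hHurwitz : ∀ μ ∈ spectrum ℂ (A.map (Complex.ofReal ·)), μ.re < 0)
    (v v' : ℝ → Fin m → ℝ)
    (hv : ∀ t ≥ (0 : ℝ), HasDerivAt v (v' t) t)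
    (hpos : ∀ t ≥ (0 : ℝ), ∀ i, 0 ≤ v t i)
    (hcomp : ∀ t ≥ (0 : ℝ), ∀ i, v' t i ≤ A.mulVec (v t) i) :
    ∃ b > (0 : ℝ), ∃ c > (0 : ℝ), ∀ t ≥ (0 : ℝ),
      Real.sqrt (∑ i, (v t i) ^ 2) ≤
        c * Real.exp (-b * t) * Real.sqrt (∑ i, (v 0 i) ^ 2) := by
  rcases Nat.eq_zero_or_pos m with hm0 | hm
  · subst hm0
    refine ⟨1, one_pos, 1, one_pos, ?_⟩
    intro t ht
    simp
  · obtain ⟨s, hs, w, hw1, hweq⟩ := exists_pos_left_vector hm A hMetzler hHurwitz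
    haveI : Nonempty (Fin m) := ⟨⟨0, hm⟩⟩
    have hwpos : ∀ i, 0 < w i := fun i => lt_of_lt_of_le (by positivity) (hw1 i)
    set ω : ℝ := ∑ i, w i with hωdef
    have hω : 0 < ω := Finset.sum_pos (fun i _ => hwpos i) Finset.univ_nonempty
    have hwle : ∀ i, w i ≤ ω := fun i =>
      Finset.single_le_sum (fun j _ => (hwpos j).le) (Finset.mem_univ i)
    set V : ℝ → ℝ := fun t => ∑ i, w i * v t i with hVdef
    set V' : ℝ → ℝ := fun t => ∑ i, w i * v' t i with hV'def
    have hVd : ∀ t ≥ (0:ℝ), HasDerivAt V (V' t) t := by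
      intro t ht
      exact HasDerivAt.fun_sum fun i _ => ((hasDerivAt_pi.mp (hv t ht)) i).const_mul (w i)
    have hV'le : ∀ t ≥ (0:ℝ), V' t ≤ -(1/ω) * V t := by
      intro t ht
      have h1 : V' t ≤ ∑ i, w i * A.mulVec (v t) i :=
        Finset.sum_le_sum fun i _ => mul_le_mul_of_nonneg_left (hcomp t ht i) (hwpos i).le
      have h2 : ∑ i, w i * A.mulVec (v t) i = ∑ j, (Aᵀ.mulVec w j) * v t j := by
        simp only [Matrix.mulVec, dotProduct, Finset.mul_sum, Finset.sum_mul]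
        rw [Finset.sum_comm]
        exact Finset.sum_congr rfl fun j _ => Finset.sum_congr rfl fun i _ => by
          rw [Matrix.transpose_apply]; ring
      have h3 : ∑ j, (Aᵀ.mulVec w j) * v t j = ∑ j, -(v t j) :=
        Finset.sum_congr rfl fun j _ => by rw [hweq j]; ring
      have h4 : V t ≤ ω * ∑ j, v t j := by
        rw [hVdef, Finset.mul_sum]
        exact Finset.sum_le_sum fun i _ => mul_le_mul_of_nonneg_right (hwle i) (hpos t ht i)
      have h5 : (1/ω) * V t ≤ ∑ j, v t j := by
        have h6 := mul_le_mul_of_nonneg_left h4 (le_of_lt (by positivity : (0:ℝ) < 1/ω))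
        calc (1/ω) * V t ≤ (1/ω) * (ω * ∑ j, v t j) := h6
          _ = ∑ j, v t j := by field_simp
      calc V' t ≤ ∑ i, w i * A.mulVec (v t) i := h1
        _ = -∑ j, v t j := by rw [h2, h3, Finset.sum_neg_distrib]
        _ ≤ -(1/ω) * V t := by linarith
    have hG := gronwall_decay (by positivity : (0:ℝ) ≤ 1/ω) hVd hV'le
    refine ⟨1/ω, by positivity, s * ω, by positivity, ?_⟩
    intro t ht
    have hS1 : Real.sqrt (∑ i, v t i ^ 2) ≤ ∑ i, v t i := by
      have h := Finset.sum_sq_le_sq_sum_of_nonneg (fun i (_ : i ∈ Finset.univ) => hpos t ht i)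
      have h2 := Real.sqrt_le_sqrt h
      rwa [Real.sqrt_sq (Finset.sum_nonneg fun i _ => hpos t ht i)] at h2
    have hS2 : ∑ i, v t i ≤ s * V t := by
      rw [hVdef, Finset.mul_sum]
      refine Finset.sum_le_sum fun i _ => ?_
      have hss : s * (1/s) = 1 := by field_simp
      have h1 : 1 ≤ s * w i := by nlinarith [hw1 i]
      nlinarith [mul_le_mul_of_nonneg_left h1 (hpos t ht i)]
    have hS3 : V t ≤ Real.exp (-(1/ω) * t) * V 0 := hG t ht
    have hS4 : V 0 ≤ ω * Real.sqrt (∑ i, v 0 i ^ 2) := by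
      rw [hVdef, hωdef, Finset.sum_mul]
      refine Finset.sum_le_sum fun i _ => ?_
      have h1 : v 0 i ≤ Real.sqrt (∑ j, v 0 j ^ 2) := by
        have h2 : v 0 i ^ 2 ≤ ∑ j, v 0 j ^ 2 :=
          Finset.single_le_sum (f := fun j => v 0 j ^ 2) (fun j _ => sq_nonneg _)
            (Finset.mem_univ i)
        have h3 := Real.sqrt_le_sqrt h2
        rwa [Real.sqrt_sq (hpos 0 le_rfl i)] at h3
      exact mul_le_mul_of_nonneg_left h1 (hwpos i).le
    calc Real.sqrt (∑ i, v t i ^ 2) ≤ ∑ i, v t i := hS1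
      _ ≤ s * V t := hS2
      _ ≤ s * (Real.exp (-(1/ω) * t) * V 0) := mul_le_mul_of_nonneg_left hS3 hs.le
      _ ≤ s * (Real.exp (-(1/ω) * t) * (ω * Real.sqrt (∑ i, v 0 i ^ 2))) :=
          mul_le_mul_of_nonneg_left
            (mul_le_mul_of_nonneg_left hS4 (Real.exp_pos _).le) hs.le
      _ = s * ω * Real.exp (-(1/ω) * t) * Real.sqrt (∑ i, v 0 i ^ 2) := by ring
end Aux
end

section
/- Let A = [a_ij] be an m×m real matrix with nonnegative off-diagonal entries, and let γ ∈ ℝ^m satisfy γ_i > 0 and (Aγ)_i < 0 for every i. Let v : [0,∞) → ℝ^m be differentiable with v'(t) ≤ A v(t) componentwise for all t ≥ 0, with 0 ≤ v_i(0) ≤ γ_i for every i. Then v(t) ≤ γ componentwise for all t ≥ 0. -/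
open Filter Topology

/-- Strict version: if `v 0 < γ` strictly and `A γ < 0`, the strict inequality
persists for all `t ≥ 0`. -/
lemma invariance_criterion_strict {m : ℕ} (A : Matrix (Fin m) (Fin m) ℝ)
    (hA : ∀ i j, i ≠ j → 0 ≤ A i j)
    (γ : Fin m → ℝ) (hAγ : ∀ i, A.mulVec γ i < 0)
    (v v' : ℝ → Fin m → ℝ)
    (hv : ∀ t ≥ (0 : ℝ), HasDerivAt v (v' t) t)
    (hcomp : ∀ t ≥ (0 : ℝ), ∀ i, v' t i ≤ A.mulVec (v t) i)
    (h0 : ∀ i, v 0 i < γ i) :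
    ∀ t ≥ (0 : ℝ), ∀ i, v t i < γ i := by
  by_contra hbad
  push_neg at hbad
  obtain ⟨T, hT0, i0, hTi⟩ := hbad
  set B : Set ℝ := {t | 0 ≤ t ∧ ∃ i, γ i ≤ v t i} with hBdef
  have hBne : B.Nonempty := ⟨T, hT0, i0, hTi⟩
  have hBbdd : BddBelow B := ⟨0, fun t ht => ht.1⟩
  set τ := sInf B with hτdef
  have hτ0 : 0 ≤ τ := le_csInf hBne (fun t ht => ht.1)
  have hcont : ∀ t ≥ (0:ℝ), ∀ i, ContinuousAt (fun s => v s i) t := fun t ht i =>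
    ((continuous_apply i).continuousAt).comp (hv t ht).continuousAt
  -- τ is a hitting point
  have hτB : ∃ i, γ i ≤ v τ i := by
    by_contra h
    push_neg at h
    have hev : ∀ᶠ s in 𝓝 τ, ∀ i, v s i < γ i := by
      rw [eventually_all]
      intro i
      exact (hcont τ hτ0 i).eventually_lt continuousAt_const (h i)
    rw [Metric.eventually_nhds_iff] at hev
    obtain ⟨δ, hδ, hball⟩ := hev
    have hlb : τ + δ/2 ≤ sInf B := by
      apply le_csInf hBne
      intro t ht
      by_contra hlt
      push_neg at hlt
      have hτt : τ ≤ t := csInf_le hBbdd ht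
      have : dist t τ < δ := by
        rw [Real.dist_eq, abs_of_nonneg (by linarith)]
        linarith
      obtain ⟨i, hi⟩ := ht.2
      exact absurd (hball this i) (not_lt.2 hi)
    rw [← hτdef] at hlb
    linarith
  have hτpos : 0 < τ := by
    rcases lt_or_eq_of_le hτ0 with h | h
    · exact h
    · obtain ⟨i, hi⟩ := hτB
      rw [← h] at hi
      exact absurd hi (not_le.2 (h0 i))
  -- before τ everything is strictly below γ
  have hless : ∀ t, 0 ≤ t → t < τ → ∀ i, v t i < γ i := by
    intro t ht hlt i
    by_contra h
    push_neg at h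
    exact absurd (csInf_le hBbdd ⟨ht, i, h⟩) (not_le.2 hlt)
  -- at τ, all components ≤ γ
  have hle : ∀ j, v τ j ≤ γ j := by
    intro j
    have htend : Tendsto (fun s => v s j) (𝓝[<] τ) (𝓝 (v τ j)) :=
      ((hcont τ hτ0 j).tendsto).mono_left nhdsWithin_le_nhds
    refine le_of_tendsto htend ?_
    have h1 : ∀ᶠ s in 𝓝[<] τ, (0:ℝ) < s :=
      eventually_nhdsWithin_of_eventually_nhds (eventually_gt_nhds hτpos)
    have h2 : ∀ᶠ s in 𝓝[<] τ, s < τ := eventually_mem_nhdsWithin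
    filter_upwards [h1, h2] with s hs1 hs2
    exact (hless s hs1.le hs2 j).le
  obtain ⟨i, hi⟩ := hτB
  have heq : v τ i = γ i := le_antisymm (hle i) hi
  -- derivative of component i at τ is nonnegative
  have hdi : HasDerivAt (fun s => v s i) (v' τ i) τ := by
    have := hv τ hτ0
    rw [hasDerivAt_pi] at this
    exact this i
  have hslope : Tendsto (slope (fun s => v s i) τ) (𝓝[<] τ) (𝓝 (v' τ i)) := by
    rw [hasDerivAt_iff_tendsto_slope] at hdi
    exact hdi.mono_left (nhdsWithin_mono τ (fun s hs => ne_of_lt hs))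
  have hderiv_nonneg : 0 ≤ v' τ i := by
    refine ge_of_tendsto hslope ?_
    have h1 : ∀ᶠ s in 𝓝[<] τ, (0:ℝ) < s :=
      eventually_nhdsWithin_of_eventually_nhds (eventually_gt_nhds hτpos)
    have h2 : ∀ᶠ s in 𝓝[<] τ, s < τ := eventually_mem_nhdsWithin
    filter_upwards [h1, h2] with s hs1 hs2
    have hnum : v s i - v τ i < 0 := by
      have := hless s hs1.le hs2 i
      rw [heq]; linarith
    have hq : 0 < (v s i - v τ i) / (s - τ) :=
      div_pos_of_neg_of_neg hnum (by linarith)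
    rw [slope_def_field]
    exact hq.le
  -- but the comparison inequality forces it negative
  have hAv : A.mulVec (v τ) i ≤ A.mulVec γ i := by
    unfold Matrix.mulVec dotProduct
    apply Finset.sum_le_sum
    intro j _
    rcases eq_or_ne j i with rfl | hne
    · rw [heq]
    · exact mul_le_mul_of_nonneg_left (hle j) (hA i j (Ne.symm hne))
  have := hcomp τ hτ0 i
  linarith [hAγ i]

/-- Invariance criterion (25) of the paper: if `A` is Metzler and `γ > 0`
satisfies `A γ < 0` componentwise, then any differentiable `v` satisfying the
comparison inequality `v' t ≤ A (v t)` componentwise with `0 ≤ v 0 ≤ γ`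
remains below `γ` for all `t ≥ 0`. -/
theorem invariance_criterion {m : ℕ} (A : Matrix (Fin m) (Fin m) ℝ)
    (hA : ∀ i j, i ≠ j → 0 ≤ A i j)
    (γ : Fin m → ℝ) (hγ : ∀ i, 0 < γ i) (hAγ : ∀ i, A.mulVec γ i < 0)
    (v v' : ℝ → Fin m → ℝ)
    (hv : ∀ t ≥ (0 : ℝ), HasDerivAt v (v' t) t)
    (hcomp : ∀ t ≥ (0 : ℝ), ∀ i, v' t i ≤ A.mulVec (v t) i)
    (h0 : ∀ i, 0 ≤ v 0 i ∧ v 0 i ≤ γ i) :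
    ∀ t ≥ (0 : ℝ), ∀ i, v t i ≤ γ i := by
  intro t ht i
  have key : ∀ ε > (0:ℝ), v t i < (1 + ε) * γ i := by
    intro ε hε
    have hγ' : ∀ j, A.mulVec ((1 + ε) • γ) j < 0 := by
      intro j
      rw [Matrix.mulVec_smul]
      have := hAγ j
      simp only [Pi.smul_apply, smul_eq_mul]
      nlinarith
    have h0' : ∀ j, v 0 j < ((1 + ε) • γ) j := by
      intro j
      have := (h0 j).2
      have hgj := hγ j
      simp only [Pi.smul_apply, smul_eq_mul]
      nlinarith
    have := invariance_criterion_strict A hA ((1 + ε) • γ) hγ' v v' hv hcomp h0' t ht i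
    simpa using this
  by_contra h
  push_neg at h
  have hε : (0:ℝ) < (v t i - γ i) / γ i := div_pos (by linarith) (hγ i)
  have := key _ hε
  have : v t i < v t i := by
    have hgi := (hγ i).ne'
    calc v t i < (1 + (v t i - γ i) / γ i) * γ i := key _ hε
      _ = v t i := by field_simp; ring
  exact lt_irrefl _ this
end

section
/- Let D ⊆ ℝ^n be an open set containing 0, let f : ℝ^n → ℝ^n be continuous with f(0) = 0, and let V : ℝ^n → ℝ be continuously differentiable on D with V(0) = 0, V(x) > 0 for all x ∈ D \ {0}, and ∇V(x)·f(x) ≤ 0 for all x ∈ D. Then the origin is stable in the sense of Lyapunov: for every ε > 0 there exists δ > 0 such that every differentiable function x : [0,∞) → ℝ^n satisfying x'(t) = f(x(t)) for all t ≥ 0 and ‖x(0)‖₂ < δ satisfies ‖x(t)‖₂ < ε for all t ≥ 0. -/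
/-- **Lyapunov's direct method, stability part** (Theorem 1(1) of the paper).
If `V` is continuously differentiable on an open set `D ∋ 0`, positive
definite on `D`, and its derivative along the continuous vector field `f`
(with `f 0 = 0`) is nonpositive on `D`, then the origin is stable in the sense
of Lyapunov: for every `ε > 0` there is `δ > 0` such that every solution of
`x' = f (x)` starting with `‖x 0‖ < δ` satisfies `‖x t‖ < ε` for all `t ≥ 0`. -/
theorem lyapunov_stability {n : ℕ} (D : Set (EuclideanSpace ℝ (Fin n)))
    (hD : IsOpen D) (h0D : (0 : EuclideanSpace ℝ (Fin n)) ∈ D)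
    (f : EuclideanSpace ℝ (Fin n) → EuclideanSpace ℝ (Fin n))
    (hf : Continuous f) (hf0 : f 0 = 0)
    (V : EuclideanSpace ℝ (Fin n) → ℝ)
    (hV : ContDiffOn ℝ 1 V D)
    (hV0 : V 0 = 0)
    (hVpos : ∀ x ∈ D, x ≠ 0 → 0 < V x)
    (hVdec : ∀ x ∈ D, fderiv ℝ V x (f x) ≤ 0) :
    ∀ ε > (0 : ℝ), ∃ δ > (0 : ℝ),
      ∀ x : ℝ → EuclideanSpace ℝ (Fin n),
        (∀ t ≥ (0 : ℝ), HasDerivAt x (f (x t)) t) →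
        ‖x 0‖ < δ → ∀ t ≥ (0 : ℝ), ‖x t‖ < ε := by
  intro ε hε
  rcases Nat.eq_zero_or_pos n with hn | hn
  · refine ⟨1, one_pos, fun x _ _ t _ => ?_⟩
    subst hn
    have hx0 : x t = 0 := Subsingleton.elim _ _
    simpa [hx0] using hε
  haveI : Nonempty (Fin n) := ⟨⟨0, hn⟩⟩
  haveI : Nontrivial (EuclideanSpace ℝ (Fin n)) := inferInstance
  -- pick r > 0 with closedBall 0 r ⊆ D and r < ε
  obtain ⟨r₀, hr₀, hball⟩ := Metric.isOpen_iff.mp hD 0 h0D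
  set r : ℝ := min (r₀ / 2) (ε / 2) with hr_def
  have hr : 0 < r := lt_min (by linarith) (by linarith)
  have hrε : r < ε := lt_of_le_of_lt (min_le_right _ _) (by linarith)
  have hcb : Metric.closedBall (0 : EuclideanSpace ℝ (Fin n)) r ⊆ D := by
    refine Set.Subset.trans ?_ hball
    intro y hy
    have : ‖y‖ ≤ r := by simpa using hy
    have : ‖y‖ < r₀ := lt_of_le_of_lt this (lt_of_le_of_lt (min_le_left _ _) (by linarith))
    simpa [Metric.mem_ball] using this
  -- minimum of V on the sphere of radius r
  have hsne : (Metric.sphere (0 : EuclideanSpace ℝ (Fin n)) r).Nonempty :=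
    NormedSpace.sphere_nonempty.mpr hr.le
  have hsD : Metric.sphere (0 : EuclideanSpace ℝ (Fin n)) r ⊆ D :=
    Set.Subset.trans Metric.sphere_subset_closedBall hcb
  obtain ⟨x₀, hx₀s, hx₀min⟩ :=
    (isCompact_sphere (0 : EuclideanSpace ℝ (Fin n)) r).exists_isMinOn hsne
      ((hV.continuousOn).mono hsD)
  set m : ℝ := V x₀ with hm_def
  have hx₀ne : x₀ ≠ 0 := by
    intro h
    have : ‖x₀‖ = r := by simpa using hx₀s
    rw [h] at this; simp at this; exact hr.ne this
  have hm : 0 < m := hVpos x₀ (hsD hx₀s) hx₀ne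
  -- continuity of V at 0 : pick δ₁ with V y < m on ball δ₁
  have hVcont : ContinuousAt V 0 := (hV.continuousOn).continuousAt (hD.mem_nhds h0D)
  have := Metric.continuousAt_iff.mp hVcont m hm
  obtain ⟨δ₁, hδ₁, hδ₁V⟩ := this
  refine ⟨min δ₁ r, lt_min hδ₁ hr, fun x hx hx0 => ?_⟩
  -- main claim: ‖x t‖ < r for all t ≥ 0
  suffices hmain : ∀ t ≥ (0:ℝ), ‖x t‖ < r by
    intro t ht; exact lt_trans (hmain t ht) hrε
  by_contra hcon
  push_neg at hcon
  obtain ⟨t₁, ht₁0, ht₁r⟩ := hcon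
  -- first hitting time
  set A : Set ℝ := {t | 0 ≤ t ∧ r ≤ ‖x t‖} with hA_def
  have hAne : A.Nonempty := ⟨t₁, ht₁0, ht₁r⟩
  have hAbdd : BddBelow A := ⟨0, fun t ht => ht.1⟩
  have hxcont : ∀ t ≥ (0:ℝ), ContinuousAt x t := fun t ht => (hx t ht).continuousAt
  have hAclosed : IsClosed A := by
    rw [← isSeqClosed_iff_isClosed]
    intro u t hu hut
    have ht0 : 0 ≤ t := ge_of_tendsto hut (Filter.Eventually.of_forall fun k => (hu k).1)
    refine ⟨ht0, ?_⟩
    have : Filter.Tendsto (fun k => ‖x (u k)‖) Filter.atTop (nhds ‖x t‖) :=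
      ((hxcont t ht0).tendsto.comp hut).norm
    exact ge_of_tendsto' this fun k => (hu k).2
  set T : ℝ := sInf A with hT_def
  have hTA : T ∈ A := hAclosed.csInf_mem hAne hAbdd
  have hT0 : 0 ≤ T := hTA.1
  have hx00 : ‖x 0‖ < r := lt_of_lt_of_le hx0 (min_le_right _ _)
  have hTpos : 0 < T := by
    rcases hT0.lt_or_eq with h | h
    · exact h
    · exact absurd hTA.2 (by rw [← h]; exact not_le.mpr hx00)
  -- for s ∈ [0, T), ‖x s‖ < r
  have hlt : ∀ s, 0 ≤ s → s < T → ‖x s‖ < r := by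
    intro s hs hsT
    by_contra h
    push_neg at h
    exact absurd (csInf_le hAbdd ⟨hs, h⟩) (not_le.mpr hsT)
  -- ‖x T‖ ≤ r (limit from the left), hence = r
  have hTle : ‖x T‖ ≤ r := by
    have hten : Filter.Tendsto (fun s => ‖x s‖) (nhdsWithin T (Set.Iio T)) (nhds ‖x T‖) :=
      ((hxcont T hT0).tendsto.mono_left nhdsWithin_le_nhds).norm
    have : ∀ᶠ s in nhdsWithin T (Set.Iio T), ‖x s‖ ≤ r := by
      filter_upwards [self_mem_nhdsWithin,
        Ioo_mem_nhdsLT_of_mem ⟨half_lt_self hTpos, le_refl T⟩] with s hs hs'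
      exact (hlt s (le_of_lt (lt_of_lt_of_le (half_pos hTpos) hs'.1.le)) hs).le
    exact le_of_tendsto hten this
  have hTr : ‖x T‖ = r := le_antisymm hTle hTA.2
  -- x s ∈ D for s ∈ [0,T]
  have hxD : ∀ s ∈ Set.Icc (0:ℝ) T, x s ∈ D := by
    intro s hs
    rcases hs.2.lt_or_eq with h | h
    · exact hcb (by simpa [Metric.mem_closedBall] using (hlt s hs.1 h).le)
    · exact hcb (by simp [Metric.mem_closedBall, h, hTr])
  -- V ∘ x has nonpositive derivative on (0,T)
  have hderiv : ∀ s ∈ Set.Icc (0:ℝ) T,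
      HasDerivAt (V ∘ x) (fderiv ℝ V (x s) (f (x s))) s := by
    intro s hs
    have hdV : DifferentiableAt ℝ V (x s) :=
      ((hV.contDiffAt (hD.mem_nhds (hxD s hs))).differentiableAt one_ne_zero)
    exact hdV.hasFDerivAt.comp_hasDerivAt s (hx s hs.1)
  have hanti : AntitoneOn (V ∘ x) (Set.Icc 0 T) := by
    apply antitoneOn_of_deriv_nonpos (convex_Icc 0 T)
    · exact fun s hs => (hderiv s hs).continuousAt.continuousWithinAt
    · intro s hs
      rw [interior_Icc] at hs
      exact (hderiv s ⟨hs.1.le, hs.2.le⟩).differentiableAt.differentiableWithinAt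
    · intro s hs
      rw [interior_Icc] at hs
      rw [(hderiv s ⟨hs.1.le, hs.2.le⟩).deriv]
      exact hVdec (x s) (hxD s ⟨hs.1.le, hs.2.le⟩)
  have hVx0 : V (x 0) < m := by
    have : dist (x 0) 0 < δ₁ := by
      simpa using lt_of_lt_of_le hx0 (min_le_left _ _)
    have := hδ₁V this
    rw [hV0] at this
    calc V (x 0) ≤ |V (x 0) - 0| := by rw [sub_zero]; exact le_abs_self _
    _ < m := by simpa [Real.dist_eq] using this
  have h1 : V (x T) ≤ V (x 0) :=
    hanti (Set.left_mem_Icc.mpr hT0) (Set.right_mem_Icc.mpr hT0) hT0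
  have h2 : m ≤ V (x T) := hx₀min (by simpa [Metric.mem_sphere, dist_eq_norm] using hTr)
  linarith
end
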